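/- arXiv:2306.13623 — 2 statements merged into one kernel-verified Lean document; each statement's English description precedes it below -/
import Mathlib

section
/- Let Ω be an open subset of ℝ^N with finite Lebesgue measure and let u ∈ L¹(Ω). Then there exists an N-function G such that ∫_Ω G(|u(x)|) dx < ∞, i.e. every integrable function on a finite-measure set belongs to some Orlicz class. -/
open MeasureTheory Filter
open scoped ENNReal

/-- The defining properties of the density `g` of an N-function:
`g 0 = 0`, `g > 0` on `(0,∞)`, nondecreasing on `[0,∞)`, right-continuous,
and `g t → ∞` as `t → ∞`. -/
def IsNDensity (g : ℝ → ℝ) : Prop :=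
  g 0 = 0 ∧ (∀ t > 0, 0 < g t) ∧ MonotoneOn g (Set.Ici 0) ∧
    (∀ t ≥ (0:ℝ), ContinuousWithinAt g (Set.Ici t) t) ∧
    Tendsto g atTop atTop

/-- The N-function associated with a density `g`: `G t = ∫_0^t g(τ) dτ`. -/
noncomputable def NFun (g : ℝ → ℝ) (t : ℝ) : ℝ := ∫ τ in (0)..t, g τ

/-- The conjugate density `g*(s) = sup {t ≥ 0 : g t ≤ s}`. -/
noncomputable def conjDensity (g : ℝ → ℝ) (s : ℝ) : ℝ := sSup {t | 0 ≤ t ∧ g t ≤ s}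

/-- The modular `ρ(u; G) = ∫_Ω G(|u(x)|) dx`, as an extended nonnegative real. -/
noncomputable def modular {N : ℕ} (Ω : Set (Fin N → ℝ)) (G : ℝ → ℝ)
    (u : (Fin N → ℝ) → ℝ) : ℝ≥0∞ :=
  ∫⁻ x in Ω, ENNReal.ofReal (G |u x|)

/-- The Orlicz norm `‖u‖_G = sup { ∫_Ω |u v| : v measurable, ∫_Ω Gs(|v|) ≤ 1 }`,
where `Gs` is the conjugate N-function of `G`. -/
noncomputable def orliczNorm {N : ℕ} (Ω : Set (Fin N → ℝ)) (Gs : ℝ → ℝ)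
    (u : (Fin N → ℝ) → ℝ) : ℝ≥0∞ :=
  ⨆ (v : (Fin N → ℝ) → ℝ) (_ : Measurable v ∧ modular Ω Gs v ≤ 1),
    ∫⁻ x in Ω, ENNReal.ofReal |u x * v x|

/-- The Luxemburg norm `‖u‖_(G) = inf { λ > 0 : ∫_Ω G(|u|/λ) ≤ 1 }`
(`⊤` if no such `λ` exists). -/
noncomputable def luxNorm {N : ℕ} (Ω : Set (Fin N → ℝ)) (G : ℝ → ℝ)
    (u : (Fin N → ℝ) → ℝ) : ℝ≥0∞ :=
  ⨅ (l : ℝ) (_ : 0 < l ∧ (∫⁻ x in Ω, ENNReal.ofReal (G (|u x| / l))) ≤ 1),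
    ENNReal.ofReal l

/-- The Δ₂ condition: `∃ k > 0, ∃ T ≥ 0, G(2t) ≤ k G(t)` for all `t ≥ T`. -/
def Delta2 (G : ℝ → ℝ) : Prop := ∃ k > (0:ℝ), ∃ T ≥ (0:ℝ), ∀ t ≥ T, G (2 * t) ≤ k * G t



noncomputable def countLE (t : ℕ → ℝ) (x : ℝ) : ℕ :=
  ((Finset.range (⌊x⌋₊ + 1)).filter (fun n => t n ≤ x)).card

lemma countLE_mono (t : ℕ → ℝ) : Monotone (countLE t) := by
  intro x y hxy
  apply Finset.card_le_card
  intro n hn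
  simp only [Finset.mem_filter, Finset.mem_range, Nat.lt_succ_iff] at *
  exact ⟨hn.1.trans (Nat.floor_le_floor hxy), hn.2.trans hxy⟩

lemma countLE_le (t : ℕ → ℝ) (hmono : Monotone t) {x : ℝ} {n : ℕ} (hx : x < t n) :
    countLE t x ≤ n := by
  have : (Finset.range (⌊x⌋₊ + 1)).filter (fun m => t m ≤ x) ⊆ Finset.range n := by
    intro m hm
    simp only [Finset.mem_filter, Finset.mem_range] at *
    by_contra h
    exact absurd ((hmono (not_lt.1 h)).trans hm.2) (not_le.2 hx)
  simpa [countLE] using Finset.card_le_card this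

lemma le_countLE (t : ℕ → ℝ) (hmono : Monotone t) (h1 : ∀ n : ℕ, (n : ℝ) + 1 ≤ t n)
    {x : ℝ} {n : ℕ} (hx : t n ≤ x) : n + 1 ≤ countLE t x := by
  have : Finset.range (n + 1) ⊆ (Finset.range (⌊x⌋₊ + 1)).filter (fun m => t m ≤ x) := by
    intro m hm
    simp only [Finset.mem_range, Nat.lt_succ_iff, Finset.mem_filter] at *
    have htm : t m ≤ x := (hmono hm).trans hx
    have : (m : ℝ) ≤ x := le_trans (by linarith [h1 m]) htm
    exact ⟨Nat.le_floor this, htm⟩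
  simpa [countLE] using Finset.card_le_card this

lemma countLE_right_const (t : ℕ → ℝ) (hmono : Monotone t)
    (h1 : ∀ n : ℕ, (n : ℝ) + 1 ≤ t n) (x : ℝ) (hx : 0 ≤ x) :
    ∃ δ : ℝ, x < δ ∧ ∀ y, x ≤ y → y < δ → countLE t y = countLE t x := by
  have hex : ∃ n : ℕ, x < t n :=
    ⟨⌈x⌉₊, lt_of_le_of_lt (Nat.le_ceil x) (by linarith [h1 ⌈x⌉₊, Nat.le_ceil x])⟩
  refine ⟨t (Nat.find hex), Nat.find_spec hex, fun y hxy hylt => ?_⟩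
  refine le_antisymm ?_ (countLE_mono t hxy)
  apply Finset.card_le_card
  intro m hm
  simp only [Finset.mem_filter, Finset.mem_range, Nat.lt_succ_iff] at *
  have htm : t m ≤ x := by
    by_contra h
    have : Nat.find hex ≤ m := Nat.find_min' hex (not_le.1 h)
    exact absurd ((hmono this).trans hm.2) (not_le.2 hylt)
  have : (m : ℝ) ≤ x := le_trans (by linarith [h1 m]) htm
  exact ⟨Nat.le_floor this, htm⟩

noncomputable def gAux (t : ℕ → ℝ) (x : ℝ) : ℝ := min x 1 + countLE t x


lemma gAux_monotone (t : ℕ → ℝ) : Monotone (gAux t) := fun x y hxy =>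
  add_le_add (min_le_min hxy le_rfl) (Nat.cast_le.2 (countLE_mono t hxy))

lemma isNDensity_gAux (t : ℕ → ℝ) (hmono : Monotone t)
    (h1 : ∀ n : ℕ, (n : ℝ) + 1 ≤ t n) : IsNDensity (gAux t) := by
  have hc0 : ∀ x : ℝ, x < t 0 → countLE t x = 0 := fun x hx =>
    Nat.le_zero.1 (countLE_le t hmono hx)
  refine ⟨?_, ?_, (gAux_monotone t).monotoneOn _, ?_, ?_⟩
  · have : countLE t 0 = 0 := hc0 0 (by linarith [h1 0])
    simp [gAux, this]
  · intro x hx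
    have : (0:ℝ) ≤ countLE t x := Nat.cast_nonneg _
    have h2 : 0 < min x 1 := lt_min hx one_pos
    unfold gAux; linarith
  · intro x hx
    obtain ⟨δ, hδ, hconst⟩ := countLE_right_const t hmono h1 x hx
    have hev : (fun y => min y 1 + ((countLE t x : ℕ) : ℝ)) =ᶠ[nhdsWithin x (Set.Ici x)] gAux t := by
      have h₁ : ∀ᶠ y in nhdsWithin x (Set.Ici x), y < δ :=
        (eventually_lt_nhds hδ).filter_mono nhdsWithin_le_nhds
      filter_upwards [h₁, self_mem_nhdsWithin] with y hy1 hy2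
      simp [gAux, hconst y hy2 hy1]
    have hcont : ContinuousWithinAt (fun y => min y 1 + ((countLE t x : ℕ) : ℝ))
        (Set.Ici x) x := by
      exact ((continuous_id.min continuous_const).add continuous_const).continuousWithinAt
    refine (hcont.congr_of_eventuallyEq hev.symm ?_)
    simp [gAux]
  · rw [tendsto_atTop_atTop]
    intro b
    refine ⟨max (t ⌈b⌉₊) 1, fun a ha => ?_⟩
    have h2 : t ⌈b⌉₊ ≤ a := le_trans (le_max_left _ _) ha
    have h3 : (⌈b⌉₊ : ℝ) + 1 ≤ countLE t a := by
      exact_mod_cast le_countLE t hmono h1 h2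
    have h4 : min a 1 = 1 := min_eq_right (le_trans (le_max_right _ _) ha)
    have : b ≤ (⌈b⌉₊ : ℝ) := Nat.le_ceil b
    unfold gAux; rw [h4]; linarith

lemma NFun_le_mul {g : ℝ → ℝ} (hg : Monotone g) {s : ℝ} (hs : 0 ≤ s) :
    NFun g s ≤ s * g s := by
  rw [NFun]
  have hint : IntervalIntegrable g MeasureTheory.volume 0 s :=
    (hg.monotoneOn _).intervalIntegrable
  calc (∫ τ in (0)..s, g τ) ≤ ∫ _ in (0)..s, g s := by
        apply intervalIntegral.integral_mono_on hs hint intervalIntegrable_const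
        intro x hx; exact hg hx.2
    _ = s * g s := by simp

theorem stmt6 {N : ℕ} (Ω : Set (Fin N → ℝ)) (hΩ : IsOpen Ω)
    (hfin : volume Ω < ⊤)
    (u : (Fin N → ℝ) → ℝ) (hu : IntegrableOn u Ω) :
    ∃ g : ℝ → ℝ, IsNDensity g ∧ modular Ω (NFun g) u < ⊤ := by
  classical
  set μ := (volume : Measure (Fin N → ℝ)).restrict Ω with hμdef
  obtain ⟨v, hvmeas, hvae⟩ : ∃ v, Measurable v ∧ u =ᵐ[μ] v :=
    ⟨hu.1.aemeasurable.mk _, hu.1.aemeasurable.measurable_mk, hu.1.aemeasurable.ae_eq_mk⟩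
  set f : (Fin N → ℝ) → ℝ≥0∞ := fun x => ENNReal.ofReal |v x| with hfdef
  have hfmeas : Measurable f := ENNReal.measurable_ofReal.comp hvmeas.abs
  -- finiteness of ∫ f
  have hI : ∫⁻ x, f x ∂μ < ⊤ := by
    have h2 := (hasFiniteIntegral_iff_norm u).1 hu.2
    have : ∫⁻ x, f x ∂μ = ∫⁻ x, ENNReal.ofReal ‖u x‖ ∂μ := by
      apply lintegral_congr_ae
      filter_upwards [hvae] with x hx
      simp [hfdef, hx, Real.norm_eq_abs]
    rwa [this]
  -- tail estimates
  have htail : ∀ n : ℕ, ∃ T : ℝ, ∫⁻ x in {x | T ≤ |v x|}, f x ∂μ ≤ 2⁻¹ ^ n := by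
    intro n
    have hsets : ∀ k : ℕ, MeasurableSet {x | (k:ℝ) ≤ |v x|} := fun k =>
      measurableSet_le measurable_const hvmeas.abs
    have hmeas0 : Tendsto (fun k : ℕ => μ {x | (k:ℝ) ≤ |v x|}) atTop (nhds 0) := by
      have hInt : ⋂ k : ℕ, {x | (k:ℝ) ≤ |v x|} = ∅ := by
        ext x
        simp only [Set.mem_iInter, Set.mem_setOf_eq, Set.mem_empty_iff_false, iff_false,
          not_forall, not_le]
        exact ⟨⌈|v x|⌉₊ + 1, by push_cast; linarith [Nat.le_ceil |v x|]⟩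
      have := tendsto_measure_iInter_atTop (μ := μ) (fun k => (hsets k).nullMeasurableSet)
        (fun i j hij => Set.setOf_subset_setOf.2 fun x hx =>
          le_trans (by exact_mod_cast Nat.cast_le.2 hij) hx)
        ⟨0, by rw [hInt] at *; exact (lt_of_le_of_lt (measure_mono (Set.subset_univ _))
          (by rw [hμdef, Measure.restrict_apply_univ]; exact hfin)).ne⟩
      rwa [hInt, measure_empty] at this
    have htendsto : Tendsto (fun k : ℕ => ∫⁻ x in {x | (k:ℝ) ≤ |v x|}, f x ∂μ)
        atTop (nhds 0) := tendsto_setLIntegral_zero hI.ne hmeas0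
    have hpos : (0:ℝ≥0∞) < 2⁻¹ ^ n := ENNReal.pow_pos (by norm_num) n
    obtain ⟨k, hk⟩ := (htendsto.eventually (gt_mem_nhds hpos)).exists
    exact ⟨k, hk.le⟩
  choose T hT using htail
  -- the sequence t
  set t : ℕ → ℝ := fun n => Nat.rec (max (T 0) 1) (fun k ih => max (T (k+1)) (ih + 1)) n
    with htdef
  have htsucc : ∀ n, t (n+1) = max (T (n+1)) (t n + 1) := fun n => rfl
  have h1 : ∀ n : ℕ, (n : ℝ) + 1 ≤ t n := by
    intro n; induction n with
    | zero =>
      have h0 : t 0 = max (T 0) 1 := rfl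
      rw [h0]; push_cast; simp
    | succ k ih =>
      have : t k + 1 ≤ t (k+1) := (htsucc k) ▸ le_max_right _ _
      push_cast; linarith
  have hmono : Monotone t := monotone_nat_of_le_succ fun n => by
    have : t n + 1 ≤ t (n+1) := (htsucc n) ▸ le_max_right _ _
    linarith
  have hTt : ∀ n, T n ≤ t n := by
    intro n; cases n with
    | zero => exact le_max_left _ _
    | succ k => exact (htsucc k) ▸ le_max_left _ _
  refine ⟨gAux t, isNDensity_gAux t hmono h1, ?_⟩
  -- pointwise bound
  have key : ∀ x, ENNReal.ofReal (NFun (gAux t) |v x|) ≤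
      f x + ∑' n : ℕ, ({y | t n ≤ |v y|}).indicator f x := by
    intro x
    set s := |v x| with hsdef
    have hs0 : 0 ≤ s := abs_nonneg _
    set c := countLE t s with hcdef
    have hb : NFun (gAux t) s ≤ s + (c:ℝ) * s := by
      have h2 : NFun (gAux t) s ≤ s * gAux t s := NFun_le_mul (gAux_monotone t) hs0
      have h3 : gAux t s ≤ 1 + (c:ℝ) := add_le_add_left (min_le_right _ _) _
      nlinarith [mul_le_mul_of_nonneg_left h3 hs0]
    calc ENNReal.ofReal (NFun (gAux t) s)
        ≤ ENNReal.ofReal (s + (c:ℝ) * s) := ENNReal.ofReal_le_ofReal hb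
      _ = ENNReal.ofReal s + (c : ℝ≥0∞) * ENNReal.ofReal s := by
          rw [ENNReal.ofReal_add hs0 (by positivity), ENNReal.ofReal_mul (by positivity)]
          simp
      _ ≤ f x + ∑' n : ℕ, ({y | t n ≤ |v y|}).indicator f x := by
          refine add_le_add le_rfl ?_
          set F := (Finset.range (⌊s⌋₊ + 1)).filter (fun n => t n ≤ s) with hF
          have hcard : (c : ℝ≥0∞) * ENNReal.ofReal s
              = ∑ n ∈ F, ({y | t n ≤ |v y|}).indicator f x := by
            have heach : ∀ n ∈ F, ({y | t n ≤ |v y|}).indicator f x = ENNReal.ofReal s := by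
              intro n hn
              have hts : t n ≤ |v x| := (Finset.mem_filter.1 hn).2
              simp [Set.indicator_of_mem, hts, hfdef, hsdef]
            rw [Finset.sum_congr rfl heach, Finset.sum_const, nsmul_eq_mul]
            rfl
          rw [hcard]
          exact ENNReal.sum_le_tsum F
  -- put everything together
  have hmodv : modular Ω (NFun (gAux t)) u
      = ∫⁻ x, ENNReal.ofReal (NFun (gAux t) |v x|) ∂μ := by
    apply lintegral_congr_ae
    filter_upwards [hvae] with x hx
    rw [hx]
  rw [hmodv]
  have hsets : ∀ n : ℕ, MeasurableSet {y | t n ≤ |v y|} := fun n =>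
    measurableSet_le measurable_const hvmeas.abs
  calc ∫⁻ x, ENNReal.ofReal (NFun (gAux t) |v x|) ∂μ
      ≤ ∫⁻ x, (f x + ∑' n : ℕ, ({y | t n ≤ |v y|}).indicator f x) ∂μ := lintegral_mono key
    _ = (∫⁻ x, f x ∂μ) + ∫⁻ x, ∑' n : ℕ, ({y | t n ≤ |v y|}).indicator f x ∂μ :=
        lintegral_add_left hfmeas _
    _ = (∫⁻ x, f x ∂μ) + ∑' n : ℕ, ∫⁻ x, ({y | t n ≤ |v y|}).indicator f x ∂μ := by
        rw [lintegral_tsum fun n => (hfmeas.indicator (hsets n)).aemeasurable]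
    _ ≤ (∫⁻ x, f x ∂μ) + ∑' n : ℕ, (2⁻¹ : ℝ≥0∞) ^ n := by
        refine add_le_add le_rfl (ENNReal.tsum_le_tsum fun n => ?_)
        rw [lintegral_indicator (hsets n)]
        refine le_trans (lintegral_mono_set ?_) (hT n)
        exact fun x hx => le_trans (hTt n) hx
    _ < ⊤ := by
        apply ENNReal.add_lt_top.2
        refine ⟨hI, ?_⟩
        rw [ENNReal.tsum_geometric]
        simp [lt_top_iff_ne_top]
end

section
/- Let a : (0,∞) → ℝ be such that the map φ : ℝ → ℝ defined by φ(t) = a(|t|)·t for t ≠ 0 and φ(0) = 0 is an odd, increasing homeomorphism of ℝ onto ℝ (in particular a(t) > 0 for all t > 0). Define A : ℝ^N → ℝ^N by A(ξ) = a(|ξ|)·ξ for ξ ≠ 0 and A(0) = 0, where |·| is the Euclidean norm and · the Euclidean inner product. Then for all ξ, ψ ∈ ℝ^N: (A(ξ) − A(ψ)) · (ξ − ψ) ≥ (a(|ξ|)|ξ| − a(|ψ|)|ψ|)·(|ξ| − |ψ|) ≥ 0, and (A(ξ) − A(ψ)) · (ξ − ψ) = 0 if and only if ξ = ψ. -/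
open MeasureTheory Filter
open scoped ENNReal

theorem stmt19 {N : ℕ}
    (a : ℝ → ℝ) (φ : ℝ → ℝ)
    (hφ0 : φ 0 = 0) (hφ : ∀ t : ℝ, t ≠ 0 → φ t = a |t| * t)
    (hodd : ∀ t : ℝ, φ (-t) = -φ t)
    (hmono : StrictMono φ) (hcont : Continuous φ)
    (hsurj : Function.Surjective φ)
    (A : EuclideanSpace ℝ (Fin N) → EuclideanSpace ℝ (Fin N))
    (hA0 : A 0 = 0) (hA : ∀ ξ : EuclideanSpace ℝ (Fin N), ξ ≠ 0 → A ξ = a ‖ξ‖ • ξ) :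
    ∀ ξ ψ : EuclideanSpace ℝ (Fin N),
      (φ ‖ξ‖ - φ ‖ψ‖) * (‖ξ‖ - ‖ψ‖) ≤ (inner ℝ (A ξ - A ψ) (ξ - ψ) : ℝ) ∧
      0 ≤ (φ ‖ξ‖ - φ ‖ψ‖) * (‖ξ‖ - ‖ψ‖) ∧
      ((inner ℝ (A ξ - A ψ) (ξ - ψ) : ℝ) = 0 ↔ ξ = ψ) := by
  -- a is positive on positives
  have ha_pos : ∀ t : ℝ, 0 < t → 0 < a t := by
    intro t ht
    have h1 : (0:ℝ) < φ t := hφ0 ▸ hmono ht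
    have h2 : φ t = a |t| * t := hφ t ht.ne'
    rw [abs_of_pos ht] at h2
    nlinarith
  -- φ at a norm
  have hφnorm : ∀ ξ : EuclideanSpace ℝ (Fin N), φ ‖ξ‖ = a ‖ξ‖ * ‖ξ‖ := by
    intro ξ
    rcases eq_or_ne (‖ξ‖) 0 with h | h
    · rw [h, hφ0, mul_zero]
    · rw [hφ _ h, abs_of_nonneg (norm_nonneg ξ)]
  -- key bound : inner (A ξ) ψ ≤ φ ‖ξ‖ * ‖ψ‖
  have hkey : ∀ ξ ψ : EuclideanSpace ℝ (Fin N),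
      (inner ℝ (A ξ) ψ : ℝ) ≤ φ ‖ξ‖ * ‖ψ‖ := by
    intro ξ ψ
    rcases eq_or_ne ξ 0 with rfl | hξ
    · simp [hA0, hφ0]
    · have hn : 0 < ‖ξ‖ := norm_pos_iff.mpr hξ
      have ha' := ha_pos _ hn
      rw [hA ξ hξ, real_inner_smul_left, hφnorm]
      have := real_inner_le_norm ξ ψ
      nlinarith
  -- inner (A ξ) ξ = φ ‖ξ‖ * ‖ξ‖
  have hself : ∀ ξ : EuclideanSpace ℝ (Fin N),
      (inner ℝ (A ξ) ξ : ℝ) = φ ‖ξ‖ * ‖ξ‖ := by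
    intro ξ
    rcases eq_or_ne ξ 0 with rfl | hξ
    · simp [hA0, hφ0]
    · rw [hA ξ hξ, real_inner_smul_left, real_inner_self_eq_norm_sq, hφnorm]
      ring
  intro ξ ψ
  have hexp : (inner ℝ (A ξ - A ψ) (ξ - ψ) : ℝ)
      = inner ℝ (A ξ) ξ - inner ℝ (A ξ) ψ - inner ℝ (A ψ) ξ + inner ℝ (A ψ) ψ := by
    rw [inner_sub_left, inner_sub_right, inner_sub_right]; ring
  have h1 : (φ ‖ξ‖ - φ ‖ψ‖) * (‖ξ‖ - ‖ψ‖) ≤ (inner ℝ (A ξ - A ψ) (ξ - ψ) : ℝ) := by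
    rw [hexp, hself ξ, hself ψ]
    have := hkey ξ ψ
    have := hkey ψ ξ
    nlinarith
  have h2 : 0 ≤ (φ ‖ξ‖ - φ ‖ψ‖) * (‖ξ‖ - ‖ψ‖) := by
    rcases le_total ‖ξ‖ ‖ψ‖ with h | h
    · have := hmono.monotone h
      nlinarith
    · have := hmono.monotone h
      nlinarith
  refine ⟨h1, h2, ?_, ?_⟩
  · intro h0
    -- then the middle quantity is zero, so norms are equal
    have hz : (φ ‖ξ‖ - φ ‖ψ‖) * (‖ξ‖ - ‖ψ‖) = 0 := le_antisymm (h0 ▸ h1) h2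
    have hnorm : ‖ξ‖ = ‖ψ‖ := by
      by_contra hne
      rcases lt_or_gt_of_ne hne with h | h
      · have := hmono h; nlinarith
      · have := hmono h; nlinarith
    rcases eq_or_ne ξ 0 with rfl | hξ
    · have : ‖ψ‖ = 0 := by rw [← hnorm]; simp
      exact (norm_eq_zero.mp this).symm
    · have hψ : ψ ≠ 0 := by
        intro h; rw [h, norm_zero] at hnorm
        exact hξ (norm_eq_zero.mp hnorm)
      have hn : 0 < ‖ξ‖ := norm_pos_iff.mpr hξ
      have ha' := ha_pos _ hn
      have : (inner ℝ (A ξ - A ψ) (ξ - ψ) : ℝ) = a ‖ξ‖ * ‖ξ - ψ‖ ^ 2 := by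
        rw [hA ξ hξ, hA ψ hψ, ← hnorm, ← smul_sub, real_inner_smul_left,
          real_inner_self_eq_norm_sq]
      rw [this] at h0
      have : ‖ξ - ψ‖ ^ 2 = 0 := by
        rcases mul_eq_zero.mp h0 with h | h
        · exact absurd h ha'.ne'
        · exact h
      have : ξ - ψ = 0 := by
        rw [← norm_eq_zero]; nlinarith [norm_nonneg (ξ - ψ)]
      exact sub_eq_zero.mp this
  · rintro rfl
    simp
end
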